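/- Consider the ODE system v' = -u - v², u' = v(1 - u) with initial data (v₀, u₀). If v₀² + 2u₀ - 1 < 0, then the solution exists globally in time and remains bounded. Moreover the solution is periodic with period 2π. -/

import Mathlib

open Real

/-- If `v₀² + 2u₀ - 1 < 0`, the solution of `v' = -u - v²`, `u' = v(1 - u)` with
data `(v₀, u₀)` exists globally, is bounded, and is `2π`-periodic. -/
theorem stmt_3 (v₀ u₀ : ℝ) (h : v₀ ^ 2 + 2 * u₀ - 1 < 0) :
    ∃ v u : ℝ → ℝ,
      (∀ t, HasDerivAt v (-u t - (v t) ^ 2) t)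
      ∧ (∀ t, HasDerivAt u (v t * (1 - u t)) t)
      ∧ v 0 = v₀ ∧ u 0 = u₀
      ∧ (∃ M : ℝ, ∀ t, |v t| ≤ M ∧ |u t| ≤ M)
      ∧ (∀ t, v (t + 2 * π) = v t ∧ u (t + 2 * π) = u t) := by
  set a : ℝ → ℝ := fun t => u₀ * Real.cos t + v₀ * Real.sin t with ha
  set b : ℝ → ℝ := fun t => v₀ * Real.cos t - u₀ * Real.sin t with hb
  set d : ℝ → ℝ := fun t => 1 - u₀ + a t with hd
  set r : ℝ := Real.sqrt (u₀ ^ 2 + v₀ ^ 2) with hr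
  have h1u : (0:ℝ) < 1 - u₀ := by nlinarith [sq_nonneg v₀]
  have hr2 : u₀ ^ 2 + v₀ ^ 2 < (1 - u₀) ^ 2 := by nlinarith
  have hrlt : r < 1 - u₀ := by
    have h1 : r < Real.sqrt ((1 - u₀) ^ 2) :=
      Real.sqrt_lt_sqrt (by positivity) hr2
    rwa [Real.sqrt_sq h1u.le] at h1
  have hasq : ∀ t, (a t) ^ 2 ≤ u₀ ^ 2 + v₀ ^ 2 := by
    intro t
    simp only [ha]
    have := Real.sin_sq_add_cos_sq t
    nlinarith [sq_nonneg (u₀ * Real.sin t - v₀ * Real.cos t)]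
  have hbsq : ∀ t, (b t) ^ 2 ≤ u₀ ^ 2 + v₀ ^ 2 := by
    intro t
    simp only [hb]
    have := Real.sin_sq_add_cos_sq t
    nlinarith [sq_nonneg (v₀ * Real.sin t + u₀ * Real.cos t)]
  have haabs : ∀ t, |a t| ≤ r := by
    intro t
    rw [← Real.sqrt_sq_eq_abs]
    exact Real.sqrt_le_sqrt (hasq t)
  have hbabs : ∀ t, |b t| ≤ r := by
    intro t
    rw [← Real.sqrt_sq_eq_abs]
    exact Real.sqrt_le_sqrt (hbsq t)
  have hdlb : ∀ t, 1 - u₀ - r ≤ d t := by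
    intro t
    have := (abs_le.mp (haabs t)).1
    simp only [hd]
    linarith
  have hdpos : ∀ t, 0 < d t := fun t => lt_of_lt_of_le (by linarith [hrlt]) (hdlb t)
  have hdne : ∀ t, d t ≠ 0 := fun t => (hdpos t).ne'
  have hda : ∀ t, HasDerivAt a (b t) t := by
    intro t
    have := ((Real.hasDerivAt_cos t).const_mul u₀).add ((Real.hasDerivAt_sin t).const_mul v₀)
    refine this.congr_deriv ?_
    simp only [hb]; ring
  have hdb : ∀ t, HasDerivAt b (-a t) t := by
    intro t
    have := ((Real.hasDerivAt_cos t).const_mul v₀).sub ((Real.hasDerivAt_sin t).const_mul u₀)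
    refine this.congr_deriv ?_
    simp only [ha]; ring
  have hdd : ∀ t, HasDerivAt d (b t) t := by
    intro t
    exact ((hasDerivAt_const t (1 - u₀)).add (hda t)).congr_deriv (zero_add _)
  refine ⟨fun t => b t / d t, fun t => a t / d t, ?_, ?_, ?_, ?_, ?_, ?_⟩
  · intro t
    have h1 := (hdb t).div (hdd t) (hdne t)
    have hne := hdne t
    have key : (-a t * d t - b t * b t) / d t ^ 2
        = -(a t / d t) - (b t / d t) ^ 2 := by
      field_simp
    rw [key] at h1
    exact h1
  · intro t
    have h1 := (hda t).div (hdd t) (hdne t)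
    have hne := hdne t
    have key : (b t * d t - a t * b t) / d t ^ 2
        = b t / d t * (1 - a t / d t) := by
      field_simp
    rw [key] at h1
    exact h1
  · simp [hb, hd, ha]
  · simp [hb, hd, ha]
  · refine ⟨r / (1 - u₀ - r), fun t => ⟨?_, ?_⟩⟩
    · rw [abs_div, abs_of_pos (hdpos t)]
      exact div_le_div₀ (by positivity) (hbabs t) (by linarith) (hdlb t)
    · rw [abs_div, abs_of_pos (hdpos t)]
      exact div_le_div₀ (by positivity) (haabs t) (by linarith) (hdlb t)
  · intro t
    constructor <;> simp [ha, hb, hd, Real.cos_add_two_pi, Real.sin_add_two_pi]
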